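/- Let k ≥ 1, let w ∈ {right, down}^{k−1} be the step word of an abstract G-stair Γ, let d be its number of down steps (so Γ has height d + 1), and let L = w ++ [down] ++ w be the step word of the increasing linking stair of Γ. For every m with 0 ≤ m ≤ k−1, the number of down steps among L_m, …, L_{m+k−2} equals d + 1 if L_{m+k−1} is a right step, and equals d if L_{m+k−1} is a down step. Equivalently (equivalence (2) ⟺ (3) of the Proposition on increasing linking stairs): a G-substair Γ′ of the increasing linking stair of Γ satisfies height(Γ′) = height(Γ) + 1 if and only if Γ′ has a vertical right cut. -/

import Mathlib

/-- A step of a stair: a right step `+(1,0)` or a down step `+(0,-1)`. -/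
inductive Step
  | right
  | down
deriving DecidableEq, BEq

/-- Let `w` be the step word (of length `k-1`) of an abstract `G`-stair with
`d` down steps (so height `d+1`), and let `L = w ++ [down] ++ w` be the step word of its
increasing linking stair.  For `0 ≤ m ≤ k-1`, the number of down steps among `L_m, …, L_{m+k-2}`
(the step word of the `G`-substair at position `m`) equals `d + 1` if `L_{m+k-1}` is a right
step (vertical right cut) and `d` if `L_{m+k-1}` is a down step (horizontal right cut). -/
theorem stmt5 (k : ℕ) (hk : 1 ≤ k) (w : List Step) (hw : w.length = k - 1)
    (d : ℕ) (hd : d = w.count Step.down)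
    (L : List Step) (hL : L = w ++ [Step.down] ++ w)
    (m : ℕ) (hmk : m ≤ k - 1) :
    (L[m + k - 1]? = some Step.right → ((L.drop m).take (k - 1)).count Step.down = d + 1) ∧
    (L[m + k - 1]? = some Step.down → ((L.drop m).take (k - 1)).count Step.down = d) := by
  obtain ⟨n, rfl⟩ : ∃ n, k = n + 1 := ⟨k - 1, by omega⟩
  simp only [Nat.add_sub_cancel] at hw hmk ⊢
  subst hd hL
  have hidx : m + (n + 1) - 1 = m + n := by omega
  rw [hidx]
  have hdrop : (w ++ [Step.down] ++ w).drop m = w.drop m ++ ([Step.down] ++ w) := by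
    rw [List.append_assoc, List.drop_append_of_le_length (by omega)]
  have hlen : n + 1 = (w.drop m).length + (m + 1) := by
    simp [List.length_drop]; omega
  have htake : ((w ++ [Step.down] ++ w).drop m).take (n + 1)
      = w.drop m ++ (Step.down :: w.take m) := by
    rw [hdrop, hlen, List.take_append]
    simp
  have hw' : w.count Step.down
      = (w.take m).count Step.down + (w.drop m).count Step.down := by
    conv_lhs => rw [← List.take_append_drop m w]
    rw [List.count_append]
  have hcount : (((w ++ [Step.down] ++ w).drop m).take (n + 1)).count Step.down
      = w.count Step.down + 1 := by
    rw [htake, List.count_append, List.count_cons, hw']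
    have e : (Step.down == Step.down) = true := by decide
    rw [e]
    rw [if_pos rfl]
    omega
  have hsucc : ((w ++ [Step.down] ++ w).drop m).take (n + 1)
      = ((w ++ [Step.down] ++ w).drop m).take n
        ++ ((w ++ [Step.down] ++ w)[m + n]?).toList := by
    rw [List.take_succ, List.getElem?_drop]
  constructor
  · intro h
    rw [hsucc, h, List.count_append] at hcount
    have h0 : ((some Step.right).toList).count Step.down = 0 := by decide
    omega
  · intro h
    rw [hsucc, h, List.count_append] at hcount
    have h1 : ((some Step.down).toList).count Step.down = 1 := by decide
    omega
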